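/- Let F = F_{2^n} be a finite field of characteristic 2 with nonzero elements indexed α₂,…,α_{2^n}, and let S_k be the Latin square with (i,j)-entry α_k(α_i − α_j). For distinct k, k', the UFS composition of S_k and S_{k'} equals S_m where α_m = α_k α_{k'}/(α_k − α_{k'}); moreover the UFS composition of S_k and S_m equals S_{k'}. -/

import Mathlib

/-- In a field `F` of characteristic 2, for distinct nonzero `k, k'`, let
`m = k·k'/(k − k')`. Then the UFS composition of the Latin squares `S_k` and
`S_{k'}` (with entries `k(i−j)` resp. `k'(i−j)`) equals `S_m`: at every position
`(i,j)` the unique common value of the agreeing column is `m·(i−j)`.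
Moreover the UFS composition of `S_k` and `S_m` equals `S_{k'}`. -/
theorem stmt6 (F : Type*) [Field F] [Fintype F] [CharP F 2]
    (k k' : F) (hk : k ≠ 0) (hk' : k' ≠ 0) (hne : k ≠ k')
    (m : F) (hm : m = k * k' / (k - k')) :
    m ≠ 0 ∧ k ≠ m ∧
    (∀ i j : F, ∃ a : F, k * (i - a) = k' * (j - a) ∧ k * (i - a) = m * (i - j)) ∧
    (∀ i j : F, ∃ a : F, k * (i - a) = m * (j - a) ∧ k * (i - a) = k' * (i - j)) := by
  have h2 : (2 : F) = 0 := by exact_mod_cast CharP.cast_eq_zero F 2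
  have hd : k - k' ≠ 0 := sub_ne_zero.mpr hne
  have hm0 : m ≠ 0 := by
    rw [hm]
    exact div_ne_zero (mul_ne_zero hk hk') hd
  have hkm : k ≠ m := by
    intro h
    rw [hm, eq_comm, div_eq_iff hd] at h
    have hkk : k * k = 0 := by linear_combination -h + (k * k') * h2
    exact hk (mul_self_eq_zero.mp hkk)
  have hkm' : k - m ≠ 0 := sub_ne_zero.mpr hkm
  have hkm'' : k * m = k' * (k - m) := by
    have hone : k - m = k * k / (k - k') := by
      rw [hm]; field_simp; linear_combination (-k') * h2
    rw [hone, hm]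
    field_simp
  refine ⟨hm0, hkm, ?_, ?_⟩
  · intro i j
    refine ⟨(k * i - k' * j) / (k - k'), ?_, ?_⟩
    · field_simp
      ring
    · rw [hm]
      field_simp
      linear_combination (k' * j - i * k') * h2
  · intro i j
    refine ⟨(k * i - m * j) / (k - m), ?_, ?_⟩
    · field_simp
      ring
    · field_simp
      linear_combination (i - j) * hkm'' + (k * m * j - k * m * i) * h2
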